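/- arXiv:1401.1266 — 2 statements merged into one kernel-verified Lean document; each statement's English description precedes it below -/
import Mathlib

section
/- Let A be a c.e. subset of ℕ that is D-maximal and Type 10. Then there is a c.e. set B disjoint from A such that A ∪ B is r-maximal and atomless. -/
open Set Function

/-- A set of naturals is computably enumerable (c.e.) -/
def CESet (A : Set ℕ) : Prop := REPred (· ∈ A)

/-- A set of naturals is computable -/
def ComputableSet (A : Set ℕ) : Prop := ComputablePred (· ∈ A)

/-- X ⊆* Y : X is almost contained in Y -/
def SubsetStar (X Y : Set ℕ) : Prop := (X \ Y).Finite

/-- X =* Y : X and Y differ by a finite set -/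
def EqStar (X Y : Set ℕ) : Prop := (X \ Y).Finite ∧ (Y \ X).Finite

/-- G is a generating set for 𝒟(A): a countable family of c.e. sets, each disjoint
from A, such that every c.e. set disjoint from A is almost covered by finitely many
members of G. -/
def Generates (A : Set ℕ) (G : Set (Set ℕ)) : Prop :=
  G.Countable ∧ (∀ X ∈ G, CESet X) ∧ (∀ X ∈ G, Disjoint X A) ∧
  ∀ D : Set ℕ, CESet D → Disjoint D A →
    ∃ F : Set (Set ℕ), F ⊆ G ∧ F.Finite ∧ SubsetStar D (⋃₀ F)

/-- S is simple -/
def SimpleSet (S : Set ℕ) : Prop :=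
  CESet S ∧ Sᶜ.Infinite ∧ ∀ W : Set ℕ, CESet W → Disjoint W S → W.Finite

/-- A is 𝒟-maximal -/
def DMaximal (A : Set ℕ) : Prop :=
  CESet A ∧ ∀ W : Set ℕ, CESet W → ∃ D : Set ℕ, CESet D ∧ Disjoint D A ∧
    (SubsetStar W (A ∪ D) ∨ EqStar (W ∪ A ∪ D) Set.univ)

/-- M is r-maximal -/
def RMaximal (M : Set ℕ) : Prop :=
  CESet M ∧ Mᶜ.Infinite ∧
    ∀ R : Set ℕ, ComputableSet R → (R ∩ Mᶜ).Finite ∨ (Rᶜ ∩ Mᶜ).Finite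

/-- M is maximal -/
def MaximalSet (M : Set ℕ) : Prop :=
  CESet M ∧ Mᶜ.Infinite ∧
    ∀ W : Set ℕ, CESet W → M ⊆ W → (W \ M).Finite ∨ Wᶜ.Finite

/-- B is atomless -/
def AtomlessSet (B : Set ℕ) : Prop :=
  ∀ C : Set ℕ, CESet C → B ⊆ C → Cᶜ.Infinite →
    ∃ E : Set ℕ, CESet E ∧ SubsetStar C E ∧ (E \ C).Infinite ∧ Eᶜ.Infinite

/-- A0, A1 form a Friedberg splitting of A -/
def FriedbergSplitting (A0 A1 A : Set ℕ) : Prop :=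
  CESet A0 ∧ CESet A1 ∧ Disjoint A0 A1 ∧ A0 ∪ A1 = A ∧
    ∀ W : Set ℕ, CESet W → ¬ CESet (W \ A) → ¬ CESet (W \ A0) ∧ ¬ CESet (W \ A1)

/-- E is a major subset of D -/
def MajorIn (E D : Set ℕ) : Prop :=
  CESet E ∧ CESet D ∧ E ⊆ D ∧ (D \ E).Infinite ∧
    ∀ W : Set ℕ, CESet W → SubsetStar Dᶜ W → SubsetStar Eᶜ W

/-- H is hh-simple: the lattice of c.e. supersets of H mod finite is a boolean algebra -/
def HHSimple (H : Set ℕ) : Prop :=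
  CESet H ∧ Hᶜ.Infinite ∧
    ∀ W : Set ℕ, CESet W → ∃ V : Set ℕ, CESet V ∧
      EqStar ((W ∪ H) ∩ (V ∪ H)) H ∧ EqStar (W ∪ V ∪ H) Set.univ

/-- A is strongly r-separable -/
def StronglyRSeparable (A : Set ℕ) : Prop :=
  ∀ B : Set ℕ, CESet B → Disjoint B A →
    ∃ C : Set ℕ, ComputableSet C ∧ B ⊆ C ∧ Disjoint C A ∧ (C \ B).Infinite

/-- Structure of a Type 5 generating family: D0 together with the R_i. -/
def Type5Family (D0 : Set ℕ) (R : ℕ → Set ℕ) : Prop :=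
  CESet D0 ∧ ¬ ComputableSet D0 ∧ D0.Infinite ∧
  Function.Injective R ∧ (∀ i, D0 ≠ R i) ∧
  (∀ i, ComputableSet (R i) ∧ (R i).Infinite) ∧
  Pairwise (Function.onFun Disjoint R) ∧
  (∀ i, Disjoint D0 (R i))

/-- Structure of a Type 7 generating family: D0 together with the R_i. -/
def Type7Family (D0 : Set ℕ) (R : ℕ → Set ℕ) : Prop :=
  CESet D0 ∧ ¬ ComputableSet D0 ∧
  Function.Injective R ∧ (∀ i, D0 ≠ R i) ∧
  (∀ i, ComputableSet (R i) ∧ (R i).Infinite) ∧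
  Pairwise (Function.onFun Disjoint R) ∧
  {i : ℕ | (D0 ∩ R i).Nonempty}.Infinite

/-- Structure of a Type 8 generating family: the D_i together with the R_i. -/
def Type8Family (D R : ℕ → Set ℕ) : Prop :=
  Function.Injective D ∧ Function.Injective R ∧ (∀ i j, D i ≠ R j) ∧
  (∀ i, CESet (D i) ∧ ¬ ComputableSet (D i)) ∧
  Pairwise (Function.onFun Disjoint D) ∧
  (∀ i, ComputableSet (R i) ∧ (R i).Infinite) ∧
  Pairwise (Function.onFun Disjoint R)

/-- Structure of a Type 9 generating family: the nested D_i together with the R_i. -/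
def Type9Family (D R : ℕ → Set ℕ) : Prop :=
  Function.Injective R ∧ (∀ i j, D i ≠ R j) ∧
  (∀ i, ComputableSet (R i) ∧ (R i).Infinite) ∧
  Pairwise (Function.onFun Disjoint R) ∧
  (∀ i, CESet (D i) ∧ ¬ ComputableSet (D i) ∧ (D i).Infinite) ∧
  (∀ l, D l ⊆ D (l + 1)) ∧
  (∀ l, ¬ CESet (D (l + 1) \ D l)) ∧
  (∀ l, {j : ℕ | (R j \ D l).Infinite}.Infinite)

def IsType1 (G : Set (Set ℕ)) : Prop := G = {∅}

def IsType2 (G : Set (Set ℕ)) : Prop :=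
  ∃ R : Set ℕ, G = {R} ∧ ComputableSet R ∧ R.Infinite

def IsType3 (G : Set (Set ℕ)) : Prop :=
  ∃ W : Set ℕ, G = {W} ∧ CESet W ∧ ¬ ComputableSet W ∧ W.Infinite

def IsType4 (G : Set (Set ℕ)) : Prop :=
  ∃ R : ℕ → Set ℕ, G = Set.range R ∧ Function.Injective R ∧
    (∀ i, ComputableSet (R i) ∧ (R i).Infinite) ∧
    Pairwise (Function.onFun Disjoint R)

def IsType5 (G : Set (Set ℕ)) : Prop :=
  ∃ (D0 : Set ℕ) (R : ℕ → Set ℕ), G = insert D0 (Set.range R) ∧ Type5Family D0 R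

def IsType6 (G : Set (Set ℕ)) : Prop :=
  ∃ D : ℕ → Set ℕ, G = Set.range D ∧ Function.Injective D ∧
    (∀ i, CESet (D i) ∧ ¬ ComputableSet (D i) ∧ (D i).Infinite) ∧
    Pairwise (Function.onFun Disjoint D)

def IsType7 (G : Set (Set ℕ)) : Prop :=
  ∃ (D0 : Set ℕ) (R : ℕ → Set ℕ), G = insert D0 (Set.range R) ∧ Type7Family D0 R

def IsType8 (G : Set (Set ℕ)) : Prop :=
  ∃ D R : ℕ → Set ℕ, G = Set.range D ∪ Set.range R ∧ Type8Family D R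

def IsType9 (G : Set (Set ℕ)) : Prop :=
  ∃ D R : ℕ → Set ℕ, G = Set.range D ∪ Set.range R ∧ Type9Family D R

def IsType10 (G : Set (Set ℕ)) : Prop :=
  ∃ D : ℕ → Set ℕ, G = Set.range D ∧
    (∀ i, CESet (D i) ∧ ¬ ComputableSet (D i) ∧ (D i).Infinite) ∧
    (∀ l, D l ⊆ D (l + 1)) ∧
    (∀ l, ¬ CESet (D (l + 1) \ D l))

/-- G is a generating set of Type n (n = 1, …, 10). -/
def GenTypeN (n : ℕ) (G : Set (Set ℕ)) : Prop :=
  match n with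
  | 1 => IsType1 G
  | 2 => IsType2 G
  | 3 => IsType3 G
  | 4 => IsType4 G
  | 5 => IsType5 G
  | 6 => IsType6 G
  | 7 => IsType7 G
  | 8 => IsType8 G
  | 9 => IsType9 G
  | 10 => IsType10 G
  | _ => False

/-- The c.e. set A is of Type n: 𝒟(A) has a generating set of Type n
but no generating set of any Type m < n. -/
def SetOfType (A : Set ℕ) (n : ℕ) : Prop :=
  (∃ G : Set (Set ℕ), Generates A G ∧ GenTypeN n G) ∧
  ∀ m : ℕ, m < n → ¬ ∃ G : Set (Set ℕ), Generates A G ∧ GenTypeN m G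

/-- (F_i) is an A-special list. -/
def ASpecialList (A : Set ℕ) (F : ℕ → Set ℕ) : Prop :=
  F 0 = A ∧ (∀ i, CESet (F i) ∧ ¬ ComputableSet (F i)) ∧
  Pairwise (Function.onFun Disjoint F) ∧
  ∀ W : Set ℕ, CESet W → ∃ i : ℕ,
    SubsetStar W (⋃ l ≤ i, F l) ∨ EqStar (W ∪ ⋃ l ≤ i, F l) Set.univ


section AuxToolkit

open Nat.Partrec (Code)
open Nat.Partrec.Code

theorem ceSet_of_sigma {f : ℕ → ℕ → Bool} (hf : Primrec₂ f) :
    CESet {n : ℕ | ∃ s, f n s = true} := by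
  have h1 : Partrec fun n : ℕ => Nat.rfind fun s => (Part.some (f n s) : Part Bool) :=
    Partrec.rfind hf.to_comp.partrec₂
  exact h1.dom_re.of_eq fun n => by
    refine Nat.rfind_dom.trans ?_
    constructor
    · rintro ⟨s, hs, -⟩; exact ⟨s, by simpa using hs⟩
    · rintro ⟨s, hs⟩; exact ⟨s, by simpa using hs, fun {m} _ => trivial⟩

theorem ceSet_sigma {X : Set ℕ} (hX : CESet X) :
    ∃ f : ℕ → ℕ → Bool, Primrec₂ f ∧ ∀ n, n ∈ X ↔ ∃ s, f n s = true := by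
  have h1 : Partrec fun n : ℕ => (Part.assert (n ∈ X) fun _ => Part.some ()).map fun _ => (0 : ℕ) :=
    Partrec.map hX ((Computable.const 0).to₂)
  obtain ⟨c, hc⟩ := exists_code.1 (Partrec.nat_iff.1 h1)
  refine ⟨fun n s => (evaln s c n).isSome, ?_, fun n => ?_⟩
  · exact Primrec.option_isSome.comp
      (primrec_evaln.comp (((Primrec.snd).pair (Primrec.const c)).pair Primrec.fst))
  · constructor
    · intro hn
      have h0 : (0 : ℕ) ∈ eval c n := by
        rw [hc]
        exact Part.mem_map _ (Part.mem_assert hn (Part.mem_some ()))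
      obtain ⟨k, hk⟩ := evaln_complete.1 h0
      exact ⟨k, by rw [Option.isSome_iff_exists]; exact ⟨0, hk⟩⟩
    · rintro ⟨s, hs⟩
      rw [Option.isSome_iff_exists] at hs
      obtain ⟨x, hx⟩ := hs
      have hx' : x ∈ eval c n := evaln_sound hx
      rw [hc] at hx'
      obtain ⟨a, ha, -⟩ := (Part.mem_map_iff _).1 hx'
      exact (Part.mem_assert_iff.1 ha).1

theorem computableSet_iff {X : Set ℕ} :
    ComputableSet X ↔ ∃ f : ℕ → Bool, Computable f ∧ ∀ n, n ∈ X ↔ f n = true := by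
  constructor
  · intro h
    obtain ⟨f, hf, hfx⟩ := ComputablePred.computable_iff.1 h
    exact ⟨f, hf, fun n => by simp only [show ((· ∈ X) : ℕ → Prop) = fun a => (f a : Prop) from hfx]⟩
  · rintro ⟨f, hf, hfx⟩
    exact ComputablePred.computable_iff.2 ⟨f, hf, funext fun n => propext (hfx n)⟩

theorem ComputableSet.compl {X : Set ℕ} (h : ComputableSet X) : ComputableSet Xᶜ :=
  (ComputablePred.not h).of_eq fun n => (Set.mem_compl_iff _ _).symm

theorem ComputableSet.union {X Y : Set ℕ} (hX : ComputableSet X) (hY : ComputableSet Y) :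
    ComputableSet (X ∪ Y) := by
  obtain ⟨f, hf, hfx⟩ := computableSet_iff.1 hX
  obtain ⟨g, hg, hgx⟩ := computableSet_iff.1 hY
  refine computableSet_iff.2 ⟨fun n => f n || g n, ?_, fun n => ?_⟩
  · exact (Computable.cond hf (Computable.const true) hg).of_eq fun n => by cases f n <;> simp
  · simp [Set.mem_union, hfx n, hgx n]

theorem ComputableSet.inter {X Y : Set ℕ} (hX : ComputableSet X) (hY : ComputableSet Y) :
    ComputableSet (X ∩ Y) := by
  obtain ⟨f, hf, hfx⟩ := computableSet_iff.1 hX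
  obtain ⟨g, hg, hgx⟩ := computableSet_iff.1 hY
  refine computableSet_iff.2 ⟨fun n => f n && g n, ?_, fun n => ?_⟩
  · exact (Computable.cond hf hg (Computable.const false)).of_eq fun n => by cases f n <;> simp
  · simp [Set.mem_inter_iff, hfx n, hgx n]

theorem ComputableSet.diff {X Y : Set ℕ} (hX : ComputableSet X) (hY : ComputableSet Y) :
    ComputableSet (X \ Y) := hX.inter hY.compl

theorem ComputableSet.of_finite {X : Set ℕ} (h : X.Finite) : ComputableSet X := by
  refine Set.Finite.induction_on X h ?_ ?_
  · exact computableSet_iff.2 ⟨fun _ => false, Computable.const false, by simp⟩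
  · intro a s _ _ ih
    have hsing : ComputableSet {a} := by
      refine computableSet_iff.2 ⟨fun n => decide (n = a), ?_, by simp⟩
      exact (Primrec.eq.comp Primrec.id (Primrec.const a)).decide.to_comp
    have := hsing.union ih
    rwa [Set.singleton_union] at this

theorem ComputableSet.ce {X : Set ℕ} (h : ComputableSet X) : CESet X :=
  ComputablePred.to_re h

theorem computableSet_of_ce_ce_compl {X : Set ℕ} (h1 : CESet X) (h2 : CESet Xᶜ) :
    ComputableSet X :=
  ComputablePred.computable_iff_re_compl_re'.2
    ⟨h1, h2.of_eq fun n => (Set.mem_compl_iff _ _)⟩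

theorem CESet.union {X Y : Set ℕ} (hX : CESet X) (hY : CESet Y) : CESet (X ∪ Y) := by
  obtain ⟨f, pf, hf⟩ := ceSet_sigma hX
  obtain ⟨g, pg, hg⟩ := ceSet_sigma hY
  have hp : Primrec₂ fun n s => f n s || g n s :=
    (Primrec.dom_bool₂ (· || ·)).comp pf pg
  exact (ceSet_of_sigma hp).of_eq fun n => by
    simp only [Set.mem_setOf_eq, Bool.or_eq_true, Set.mem_union, hf n, hg n]
    constructor
    · rintro ⟨s, hs | hs⟩
      · exact Or.inl ⟨s, hs⟩
      · exact Or.inr ⟨s, hs⟩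
    · rintro (⟨s, hs⟩ | ⟨s, hs⟩)
      · exact ⟨s, Or.inl hs⟩
      · exact ⟨s, Or.inr hs⟩

theorem CESet.inter {X Y : Set ℕ} (hX : CESet X) (hY : CESet Y) : CESet (X ∩ Y) := by
  obtain ⟨f, pf, hf⟩ := ceSet_sigma hX
  obtain ⟨g, pg, hg⟩ := ceSet_sigma hY
  have hp : Primrec₂ fun n (s : ℕ) => f n s.unpair.1 && g n s.unpair.2 := by
    have h1 : Primrec fun p : ℕ × ℕ => f p.1 p.2.unpair.1 :=
      pf.comp Primrec.fst ((Primrec.fst).comp (Primrec.unpair.comp Primrec.snd))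
    have h2 : Primrec fun p : ℕ × ℕ => g p.1 p.2.unpair.2 :=
      pg.comp Primrec.fst ((Primrec.snd).comp (Primrec.unpair.comp Primrec.snd))
    exact (Primrec.dom_bool₂ (· && ·)).comp h1 h2
  exact (ceSet_of_sigma hp).of_eq fun n => by
    simp only [Set.mem_setOf_eq, Bool.and_eq_true, Set.mem_inter_iff, hf n, hg n]
    constructor
    · rintro ⟨s, hs1, hs2⟩; exact ⟨⟨_, hs1⟩, ⟨_, hs2⟩⟩
    · rintro ⟨⟨s1, hs1⟩, ⟨s2, hs2⟩⟩
      exact ⟨Nat.pair s1 s2, by simp [Nat.unpair_pair, hs1, hs2]⟩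

theorem CESet.of_finite {X : Set ℕ} (h : X.Finite) : CESet X :=
  (ComputableSet.of_finite h).ce

theorem ceSet_mod {X Y : Set ℕ} (hY : CESet Y) (h1 : (X \ Y).Finite) (h2 : (Y \ X).Finite) :
    CESet X := by
  have hXeq : X = (Y ∩ (Y \ X)ᶜ) ∪ (X \ Y) := by
    ext x
    by_cases hx : x ∈ Y <;> by_cases hx' : x ∈ X <;> simp [hx, hx']
  rw [hXeq]
  exact (hY.inter (ComputableSet.compl (ComputableSet.of_finite h2)).ce).union (CESet.of_finite h1)

def ballB (g : ℕ → ℕ → Bool) (n k : ℕ) : Bool :=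
  Nat.rec true (fun j acc => acc && !(g n j)) k

theorem ballB_primrec {g : ℕ → ℕ → Bool} (hg : Primrec₂ g) : Primrec₂ (ballB g) := by
  have hh : Primrec₂ fun (p : ℕ × ℕ) (q : ℕ × Bool) => q.2 && !(g p.1 q.1) :=
    (Primrec.dom_bool₂ fun a b => a && !b).comp
      (Primrec.snd.comp Primrec.snd)
      (hg.comp (Primrec.fst.comp Primrec.fst) (Primrec.fst.comp Primrec.snd))
  exact Primrec.nat_rec' Primrec.snd (Primrec.const true) hh

theorem ballB_eq {g : ℕ → ℕ → Bool} {n k : ℕ} :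
    ballB g n k = true ↔ ∀ j < k, g n j = false := by
  induction k with
  | zero => simp [ballB]
  | succ k ih =>
    show (ballB g n k && !(g n k)) = true ↔ _
    rw [Bool.and_eq_true, ih]
    constructor
    · rintro ⟨h1, h2⟩ j hj
      rcases Nat.lt_succ_iff_lt_or_eq.1 hj with hj | rfl
      · exact h1 j hj
      · simpa using h2
    · intro h
      exact ⟨fun j hj => h j (hj.trans (Nat.lt_succ_self k)), by simp [h k (Nat.lt_succ_self k)]⟩

theorem ce_reduction {X Y : Set ℕ} (hX : CESet X) (hY : CESet Y) :
    ∃ X₁ Y₁ : Set ℕ, CESet X₁ ∧ CESet Y₁ ∧ X₁ ⊆ X ∧ Y₁ ⊆ Y ∧ X₁ ∩ Y₁ = ∅ ∧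
      X₁ ∪ Y₁ = X ∪ Y := by
  classical
  obtain ⟨f, pf, hf⟩ := ceSet_sigma hX
  obtain ⟨g, pg, hg⟩ := ceSet_sigma hY
  refine ⟨{n | ∃ k, f n k = true ∧ ∀ j < k, g n j = false},
          {n | ∃ k, g n k = true ∧ ∀ j ≤ k, f n j = false}, ?_, ?_, ?_, ?_, ?_, ?_⟩
  · have hp : Primrec₂ fun n k => f n k && ballB g n k :=
      (Primrec.dom_bool₂ (· && ·)).comp pf (ballB_primrec pg)
    exact (ceSet_of_sigma hp).of_eq fun n => by
      simp only [Set.mem_setOf_eq, Bool.and_eq_true, ballB_eq]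
  · have hp : Primrec₂ fun n k => g n k && ballB f n (k + 1) := by
      have h2 : Primrec fun p : ℕ × ℕ => ballB f p.1 (p.2 + 1) :=
        (ballB_primrec pf).comp Primrec.fst (Primrec.succ.comp Primrec.snd)
      exact (Primrec.dom_bool₂ (· && ·)).comp pg h2
    refine (ceSet_of_sigma hp).of_eq fun n => by
      simp only [Set.mem_setOf_eq, Bool.and_eq_true, ballB_eq]
      exact exists_congr fun k => and_congr_right fun _ =>
        ⟨fun h j hj => h j (Nat.lt_succ_of_le hj), fun h j hj => h j (Nat.lt_succ_iff.1 hj)⟩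
  · rintro n ⟨k, hk, -⟩; exact (hf n).2 ⟨k, hk⟩
  · rintro n ⟨k, hk, -⟩; exact (hg n).2 ⟨k, hk⟩
  · ext n
    simp only [Set.mem_inter_iff, Set.mem_setOf_eq, Set.mem_empty_iff_false, iff_false]
    rintro ⟨⟨k, hk1, hk2⟩, ⟨k', hk1', hk2'⟩⟩
    rcases le_or_gt k k' with h | h
    · exact absurd hk1 (by simp [hk2' k h])
    · exact absurd hk1' (by simp [hk2 k' h])
  · ext n
    simp only [Set.mem_union, Set.mem_setOf_eq, hf n, hg n]
    constructor
    · rintro (⟨k, hk, -⟩ | ⟨k, hk, -⟩)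
      · exact Or.inl ⟨k, hk⟩
      · exact Or.inr ⟨k, hk⟩
    · intro h
      have hP : ∃ j, f n j = true ∨ g n j = true := by
        rcases h with ⟨s, hs⟩ | ⟨s, hs⟩
        · exact ⟨s, Or.inl hs⟩
        · exact ⟨s, Or.inr hs⟩
      let K := Nat.find hP
      rcases Nat.find_spec hP with hK | hK
      · refine Or.inl ⟨K, hK, fun j hj => ?_⟩
        have := Nat.find_min hP hj
        push_neg at this
        simpa using this.2
      · by_cases hfK : f n K = true
        · refine Or.inl ⟨K, hfK, fun j hj => ?_⟩
          have := Nat.find_min hP hj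
          push_neg at this
          simpa using this.2
        · refine Or.inr ⟨K, hK, fun j hj => ?_⟩
          rcases Nat.lt_or_ge j K with hj' | hj'
          · have := Nat.find_min hP hj'
            push_neg at this
            simpa using this.1
          · have : j = K := le_antisymm hj hj'
            subst this
            simpa using hfK

theorem stab_lemma {A : Set ℕ} {D : ℕ → Set ℕ}
    (hDce : ∀ i, CESet (D i)) (hDnc : ∀ i, ¬ ComputableSet (D i)) (hDinf : ∀ i, (D i).Infinite)
    (hDA : ∀ i, Disjoint (D i) A)
    (hnest : ∀ l, D l ⊆ D (l + 1))
    (hdiffnc : ∀ l, ¬ CESet (D (l + 1) \ D l))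
    (hgen : Generates A (Set.range D))
    (cover : ∀ W, CESet W → Disjoint W A → ∃ k, (W \ D k).Finite)
    (hno9 : ¬ ∃ G, Generates A G ∧ IsType9 G) :
    ∃ j0, ∀ V, ComputableSet V → Disjoint V A → (V \ D j0).Finite := by
  by_contra hcon
  push_neg at hcon
  have hmono : ∀ {i j : ℕ}, i ≤ j → D i ⊆ D j := by
    intro i j h
    induction h with
    | refl => exact subset_rfl
    | step _ ih => exact ih.trans (hnest _)
  have step : ∀ (n : ℕ) (U : Set ℕ), ComputableSet U → Disjoint U A →
      ∃ p : Set ℕ × ℕ, ComputableSet p.1 ∧ Disjoint p.1 A ∧ Disjoint p.1 U ∧ n ≤ p.2 ∧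
        (p.1 \ D p.2).Infinite := by
    intro n U hU hUA
    obtain ⟨m0, hm0⟩ := cover U hU.ce hUA
    obtain ⟨V0, hV0c, hV0A, hV0inf⟩ := hcon (max m0 n)
    have hV0inf' : (V0 \ D (max m0 n)).Infinite := hV0inf
    refine ⟨(V0 \ U, max m0 n), hV0c.diff hU, hV0A.mono_left Set.diff_subset,
      disjoint_sdiff_self_left, le_max_right _ _, ?_⟩
    have hsub : (V0 \ D (max m0 n)) \ (U \ D m0) ⊆ (V0 \ U) \ D (max m0 n) := by
      rintro x ⟨⟨hxV, hxD⟩, hxU⟩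
      refine ⟨⟨hxV, fun hU' => hxU ⟨hU', fun hm => hxD (hmono (le_max_left _ _) hm)⟩⟩, hxD⟩
    exact ((hV0inf'.diff hm0).mono hsub)
  classical
  obtain ⟨V0, hV0c, hV0A, hV0inf⟩ := hcon 0
  let T := {q : (Set ℕ × Set ℕ) × ℕ // ComputableSet q.1.1 ∧ Disjoint q.1.1 A ∧
    ComputableSet q.1.2 ∧ Disjoint q.1.2 A ∧ (q.1.1 \ D q.2).Infinite ∧ q.1.1 ⊆ q.1.2}
  let init : T := ⟨((V0, V0), 0), hV0c, hV0A, hV0c, hV0A, hV0inf, subset_rfl⟩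
  let succF : ℕ → T → T := fun n s =>
    ⟨(((step (n+1) s.val.1.2 s.prop.2.2.1 s.prop.2.2.2.1).choose.1,
       s.val.1.2 ∪ (step (n+1) s.val.1.2 s.prop.2.2.1 s.prop.2.2.2.1).choose.1),
      (step (n+1) s.val.1.2 s.prop.2.2.1 s.prop.2.2.2.1).choose.2),
     by
       obtain ⟨h1, h2, h3, h4, h5⟩ :=
         (step (n+1) s.val.1.2 s.prop.2.2.1 s.prop.2.2.2.1).choose_spec
       exact ⟨h1, h2, s.prop.2.2.1.union h1, Set.disjoint_union_left.2 ⟨s.prop.2.2.2.1, h2⟩,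
         h5, Set.subset_union_right⟩⟩
  let chain : ℕ → T := fun n => Nat.rec init (fun n s => succF n s) n
  let R : ℕ → Set ℕ := fun n => (chain n).val.1.1
  let U : ℕ → Set ℕ := fun n => (chain n).val.1.2
  let M : ℕ → ℕ := fun n => (chain n).val.2
  have hRprops : ∀ n, ComputableSet (R n) ∧ Disjoint (R n) A ∧ (R n \ D (M n)).Infinite ∧
      R n ⊆ U n := fun n =>
    ⟨(chain n).prop.1, (chain n).prop.2.1, (chain n).prop.2.2.2.2.1, (chain n).prop.2.2.2.2.2⟩
  have hsuccspec : ∀ n, Disjoint (R (n+1)) (U n) ∧ (n+1) ≤ M (n+1) ∧ U (n+1) = U n ∪ R (n+1) := by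
    intro n
    have h := (step (n+1) (chain n).val.1.2 (chain n).prop.2.2.1
      (chain n).prop.2.2.2.1).choose_spec
    exact ⟨h.2.2.1, h.2.2.2.1, rfl⟩
  have hUmono : ∀ n m, n ≤ m → U n ⊆ U m := by
    intro n m h
    induction h with
    | refl => exact subset_rfl
    | @step m _ ih =>
      rw [(hsuccspec m).2.2]
      exact ih.trans Set.subset_union_left
  have hRdisj : ∀ k n, k < n → Disjoint (R n) (R k) := by
    intro k n hkn
    obtain ⟨n, rfl⟩ : ∃ m, n = m + 1 := ⟨n - 1, by omega⟩
    exact (hsuccspec n).1.mono_right (((hRprops k).2.2.2).trans (hUmono k n (by omega)))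
  have hRinf : ∀ n, (R n).Infinite := fun n => ((hRprops n).2.2.1).mono Set.diff_subset
  have hpair : Pairwise (Function.onFun Disjoint R) := by
    intro i j hij
    rcases lt_or_gt_of_ne hij with h | h
    · exact (hRdisj i j h).symm
    · exact hRdisj j i h
  have hinj : Function.Injective R := by
    intro i j hij
    by_contra hne
    have h : Disjoint (R i) (R j) := hpair hne
    rw [hij, disjoint_self] at h
    exact (hRinf j).nonempty.ne_empty h
  have hlast : ∀ l, {j : ℕ | (R j \ D l).Infinite}.Infinite := by
    intro l
    refine Set.Infinite.mono (s := Set.Ici (l+1)) ?_ (Set.Ici_infinite _)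
    intro j hj
    have hj' : l + 1 ≤ j := hj
    obtain ⟨n, rfl⟩ : ∃ m, j = m + 1 := ⟨j - 1, by omega⟩
    have hMl : l ≤ M (n+1) := le_trans (by omega) (hsuccspec n).2.1
    exact ((hRprops (n+1)).2.2.1).mono (Set.diff_subset_diff_right (hmono hMl))
  apply hno9
  refine ⟨Set.range D ∪ Set.range R, ⟨?_, ?_, ?_, ?_⟩, ⟨D, R, rfl, ?_⟩⟩
  · exact (Set.countable_range D).union (Set.countable_range R)
  · rintro X (⟨i, rfl⟩ | ⟨i, rfl⟩)
    exacts [hDce i, ((hRprops i).1).ce]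
  · rintro X (⟨i, rfl⟩ | ⟨i, rfl⟩)
    exacts [hDA i, (hRprops i).2.1]
  · intro W hW hWA
    obtain ⟨F, hF1, hF2, hF3⟩ := hgen.2.2.2 W hW hWA
    exact ⟨F, hF1.trans Set.subset_union_left, hF2, hF3⟩
  · exact ⟨hinj, fun i j h => hDnc i (by rw [h]; exact (hRprops j).1),
      fun i => ⟨(hRprops i).1, hRinf i⟩, hpair,
      fun i => ⟨hDce i, hDnc i, hDinf i⟩, hnest, hdiffnc, hlast⟩

end AuxToolkit


theorem stmt_12 (A : Set ℕ) (hA : CESet A) (hmax : DMaximal A)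
    (h10 : SetOfType A 10) :
    ∃ B : Set ℕ, CESet B ∧ Disjoint B A ∧ RMaximal (A ∪ B) ∧
      AtomlessSet (A ∪ B) := by
  classical
  obtain ⟨⟨G, hgen, hG10⟩, hno⟩ := h10
  have hG10' : IsType10 G := hG10
  obtain ⟨D, rfl, hD3, hnest, hdiffnc⟩ := hG10'
  have hDce : ∀ i, CESet (D i) := fun i => (hD3 i).1
  have hDnc : ∀ i, ¬ ComputableSet (D i) := fun i => (hD3 i).2.1
  have hDinf : ∀ i, (D i).Infinite := fun i => (hD3 i).2.2
  have hDA : ∀ i, Disjoint (D i) A := fun i => hgen.2.2.1 _ ⟨i, rfl⟩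
  have hmono : ∀ {i j : ℕ}, i ≤ j → D i ⊆ D j := by
    intro i j h
    induction h with
    | refl => exact subset_rfl
    | step _ ih => exact ih.trans (hnest _)
  have cover : ∀ W, CESet W → Disjoint W A → ∃ k, (W \ D k).Finite := by
    intro W hW hWA
    obtain ⟨F, hF1, hF2, hF3⟩ := hgen.2.2.2 W hW hWA
    have hbound : ∃ k, ⋃₀ F ⊆ D k := by
      let idx : Set ℕ → ℕ := fun X => if h : ∃ i, X = D i then h.choose else 0
      refine ⟨hF2.toFinset.sup idx, ?_⟩
      rintro x ⟨X, hXF, hxX⟩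
      have hex : ∃ i, X = D i := by
        obtain ⟨i, hi⟩ := hF1 hXF
        exact ⟨i, hi.symm⟩
      have hXD : X = D (idx X) := by
        simp only [idx, dif_pos hex]
        exact hex.choose_spec
      have hle : idx X ≤ hF2.toFinset.sup idx :=
        Finset.le_sup (hF2.mem_toFinset.2 hXF)
      exact hmono hle (hXD ▸ hxX)
    obtain ⟨k, hk⟩ := hbound
    refine ⟨k, hF3.subset ?_⟩
    rintro x ⟨hxW, hxD⟩
    exact ⟨hxW, fun hxF => hxD (hk hxF)⟩
  have hfin_diff_inf : ∀ l, (D (l+1) \ D l).Infinite := by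
    intro l
    by_contra h
    rw [Set.not_infinite] at h
    exact hdiffnc l (CESet.of_finite h)
  have hAc_inf : ∀ k, (Aᶜ \ D k).Infinite := by
    intro k
    by_contra h
    rw [Set.not_infinite] at h
    apply hdiffnc k
    apply CESet.of_finite
    refine h.subset ?_
    rintro x ⟨hx1, hx2⟩
    exact ⟨fun hxA => Set.disjoint_left.1 (hDA (k+1)) hx1 hxA, hx2⟩
  have hno9 : ¬∃ G9, Generates A G9 ∧ IsType9 G9 := by
    rintro ⟨G9, hg9, ht9⟩
    exact hno 9 (by norm_num) ⟨G9, hg9, ht9⟩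
  obtain ⟨j0, hstab⟩ := stab_lemma hDce hDnc hDinf hDA hnest hdiffnc hgen cover hno9
  have F6 : ∀ (R : Set ℕ) (m : ℕ), ComputableSet R → ((R ∩ Aᶜ) \ D m).Finite →
      ((R ∩ Aᶜ) \ D j0).Finite := by
    intro R m hR hfin
    have hVce : CESet (R ∩ D m) := hR.ce.inter (hDce m)
    have hVcce : CESet (R ∩ D m)ᶜ := by
      apply ceSet_mod ((hR.compl.ce).union hA)
      · refine hfin.subset ?_
        rintro x ⟨hx1, hx2⟩
        have hxR : x ∈ R := by
          by_contra hxR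
          exact hx2 (Or.inl hxR)
        have hxA : x ∉ A := fun h => hx2 (Or.inr h)
        have hxm : x ∉ D m := fun h => hx1 ⟨hxR, h⟩
        exact ⟨⟨hxR, hxA⟩, hxm⟩
      · refine Set.Finite.subset Set.finite_empty ?_
        rintro x ⟨hx1, hx2⟩
        simp only [Set.mem_compl_iff, not_not] at hx2
        rcases hx1 with h | h
        · exact absurd hx2.1 h
        · exact absurd h (Set.disjoint_left.1 (hDA m) hx2.2)
    have hVcomp := computableSet_of_ce_ce_compl hVce hVcce
    have hVA : Disjoint (R ∩ D m) A := (hDA m).mono_left Set.inter_subset_right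
    have h1 := hstab _ hVcomp hVA
    refine (hfin.union h1).subset ?_
    rintro x ⟨⟨hxR, hxA⟩, hxj⟩
    by_cases hxm : x ∈ D m
    · exact Or.inr ⟨⟨hxR, hxm⟩, hxj⟩
    · exact Or.inl ⟨⟨hxR, hxA⟩, hxm⟩
  have F7 : ∀ R : Set ℕ, ComputableSet R →
      ((R ∩ Aᶜ) \ D j0).Finite ∨ ((Rᶜ ∩ Aᶜ) \ D j0).Finite := by
    intro R hR
    obtain ⟨E, hEce, hEA, hcase⟩ := hmax.2 R hR.ce
    obtain ⟨m, hEm⟩ := cover E hEce hEA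
    rcases hcase with h1 | h2
    · left
      apply F6 R m hR
      refine (h1.union hEm).subset ?_
      rintro x ⟨⟨hxR, hxA⟩, hxm⟩
      by_cases hxE : x ∈ E
      · exact Or.inr ⟨hxE, hxm⟩
      · exact Or.inl ⟨hxR, fun h => h.elim hxA hxE⟩
    · right
      apply F6 Rᶜ m hR.compl
      refine (h2.2.union hEm).subset ?_
      rintro x ⟨⟨hxR, hxA⟩, hxm⟩
      by_cases hxE : x ∈ E
      · exact Or.inr ⟨hxE, hxm⟩
      · refine Or.inl ⟨trivial, fun h => ?_⟩
        rcases h with (h | h) | h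
        exacts [hxR h, hxA h, hxE h]
  refine ⟨D j0, hDce j0, hDA j0, ⟨hA.union (hDce j0), ?_, ?_⟩, ?_⟩
  · rw [Set.compl_union, ← Set.diff_eq]
    exact hAc_inf j0
  · intro R hR
    rcases F7 R hR with h | h
    · left
      refine h.subset ?_
      rintro x ⟨hxR, hxM⟩
      simp only [Set.mem_compl_iff, Set.mem_union, not_or] at hxM
      exact ⟨⟨hxR, hxM.1⟩, hxM.2⟩
    · right
      refine h.subset ?_
      rintro x ⟨hxR, hxM⟩
      simp only [Set.mem_compl_iff, Set.mem_union, not_or] at hxM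
      exact ⟨⟨hxR, hxM.1⟩, hxM.2⟩
  · intro C hC hMC hCc
    obtain ⟨E0, hE0ce, hE0A, hcase⟩ := hmax.2 C hC
    obtain ⟨m, hE0m⟩ := cover E0 hE0ce hE0A
    rcases hcase with h1 | h2
    · have hCm : (C \ (A ∪ D m)).Finite := by
        refine (h1.union hE0m).subset ?_
        rintro x ⟨hxC, hx2⟩
        by_cases hxE : x ∈ E0
        · exact Or.inr ⟨hxE, fun h => hx2 (Or.inr h)⟩
        · exact Or.inl ⟨hxC, fun h => by rcases h with h | h; exacts [hx2 (Or.inl h), hxE h]⟩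
      refine ⟨C ∪ D (m+1), hC.union (hDce (m+1)), ?_, ?_, ?_⟩
      · refine Set.Finite.subset Set.finite_empty ?_
        rintro x ⟨hx1, hx2⟩
        exact (hx2 (Or.inl hx1)).elim
      · refine ((hfin_diff_inf m).diff hCm).mono ?_
        rintro x ⟨⟨hx1, hx2⟩, hx3⟩
        have hxA : x ∉ A := Set.disjoint_left.1 (hDA (m+1)) hx1
        have hxC : x ∉ C := fun hC' =>
          hx3 ⟨hC', fun h => by rcases h with h | h; exacts [hxA h, hx2 h]⟩
        exact ⟨Or.inr hx1, hxC⟩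
      · refine ((hAc_inf (m+1)).diff hCm).mono ?_
        rintro x ⟨⟨hxA, hxD⟩, hx3⟩
        have hxC : x ∉ C := fun hC' =>
          hx3 ⟨hC', fun h => by
            rcases h with h | h
            exacts [hxA h, hxD (hmono (Nat.le_succ m) h)]⟩
        intro h
        rcases h with h | h
        exacts [hxC h, hxD h]
    · exfalso
      have hAC : A ⊆ C := (Set.subset_union_left).trans hMC
      have hDC : D j0 ⊆ C := (Set.subset_union_right).trans hMC
      have hCcE0 : (Cᶜ \ E0).Finite := by
        refine h2.2.subset ?_
        rintro x ⟨hx1, hx2⟩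
        refine ⟨trivial, fun h => ?_⟩
        rcases h with (h | h) | h
        exacts [hx1 h, hx1 (hAC h), hx2 h]
      obtain ⟨C1, E1, hC1ce, hE1ce, hC1sub, hE1sub, hdisj, huni⟩ := ce_reduction hC hE0ce
      have hE1comp : ComputableSet E1 := by
        apply computableSet_of_ce_ce_compl hE1ce
        apply ceSet_mod hC1ce
        · refine hCcE0.subset ?_
          rintro x ⟨hx1, hx2⟩
          have hx3 : x ∉ C ∪ E0 := fun h => by
            rw [← huni] at h
            rcases h with h | h
            exacts [hx2 h, hx1 h]
          exact ⟨fun h => hx3 (Or.inl h), fun h => hx3 (Or.inr h)⟩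
        · refine Set.Finite.subset Set.finite_empty ?_
          rintro x ⟨hx1, hx2⟩
          simp only [Set.mem_compl_iff, not_not] at hx2
          exact (hdisj ▸ Set.mem_inter hx1 hx2 : x ∈ (∅ : Set ℕ))
      have hE1A : Disjoint E1 A := hE0A.mono_left hE1sub
      have hE1D := hstab E1 hE1comp hE1A
      apply hCc
      refine (hCcE0.union hE1D).subset ?_
      intro x hx
      by_cases hxE : x ∈ E0
      · have hx1 : x ∈ C1 ∪ E1 := by
          rw [huni]
          exact Or.inr hxE
        rcases hx1 with h | h
        · exact absurd (hC1sub h) hx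
        · exact Or.inr ⟨h, fun hD' => hx (hDC hD')⟩
      · exact Or.inl ⟨hx, hxE⟩
end

section
/- Let D be a hhsimple subset of ℕ and let E ⊆ D be a c.e. set that is major in D. Then every hhsimple set H with E ⊆ H satisfies D ⊆* H. -/
open Set Function

theorem REPred.union {p q : ℕ → Prop} (hp : REPred p) (hq : REPred q) :
    REPred fun a => p a ∨ q a := by
  obtain ⟨k, hk, H⟩ := Partrec.merge' hp hq
  exact hk.dom_re.of_eq fun a => by
    rw [(H a).2]
    simp [Part.assert]

theorem stmt_16 (D E : Set ℕ) (hD : HHSimple D) (hE : MajorIn E D)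
    (H : Set ℕ) (hH : HHSimple H) (hEH : E ⊆ H) :
    SubsetStar D H := by
  obtain ⟨hDce, hDcInf, hDprop⟩ := hD
  obtain ⟨hEce, _, hED, _, hMaj⟩ := hE
  obtain ⟨hHce, _, hHprop⟩ := hH
  obtain ⟨V, hVce, h1, h2⟩ := hHprop D hDce
  have hcVH : CESet (V ∪ H) := by
    have := REPred.union hVce hHce
    exact this.of_eq fun a => by simp [Set.mem_union]
  have hDc : SubsetStar Dᶜ (V ∪ H) := by
    apply h2.2.subset
    intro x hx
    simp only [Set.mem_diff, Set.mem_compl_iff, Set.mem_union] at hx ⊢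
    tauto
  have hEc : SubsetStar Eᶜ (V ∪ H) := hMaj _ hcVH hDc
  have key : D \ H ⊆ (Eᶜ \ (V ∪ H)) ∪ (((D ∪ H) ∩ (V ∪ H)) \ H) := by
    intro x hx
    by_cases hxv : x ∈ V ∪ H
    · exact Or.inr ⟨⟨Or.inl hx.1, hxv⟩, hx.2⟩
    · exact Or.inl ⟨fun hxE => hx.2 (hEH hxE), hxv⟩
  exact (hEc.union h1.1).subset key
end
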